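/- Let H₁, H₂ be symmetric positive semidefinite n×n real matrices, B ∈ ℝ^{n×n}, and η > 0. The 2n×2n matrix J = [[I, -η·Bᵀ·H₂·B],[η·H₁, I]] satisfies det(J) = det(I + η²·H₁·Bᵀ·H₂·B) ≥ 1. -/

import Mathlib

open Matrix
open scoped MatrixOrder

lemma det_one_add_psd {n : ℕ} (P : Matrix (Fin n) (Fin n) ℝ) (hP : P.PosSemidef) :
    1 ≤ ((1 : Matrix (Fin n) (Fin n) ℝ) + P).det := by
  have hU := (Matrix.mem_unitaryGroup_iff).mp (hP.1.eigenvectorUnitary).2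
  have h1 : (1 : Matrix (Fin n) (Fin n) ℝ) + P =
      (hP.1.eigenvectorUnitary : Matrix (Fin n) (Fin n) ℝ) *
        (1 + diagonal (RCLike.ofReal ∘ hP.1.eigenvalues)) *
        (star (hP.1.eigenvectorUnitary : Matrix (Fin n) (Fin n) ℝ)) := by
    rw [Matrix.mul_add, Matrix.add_mul, Matrix.mul_one, hU]
    conv_lhs => rw [hP.1.spectral_theorem, Unitary.conjStarAlgAut_apply]
  rw [h1, det_mul_right_comm, hU, one_mul]
  have : ((1 : Matrix (Fin n) (Fin n) ℝ) + diagonal (RCLike.ofReal ∘ hP.1.eigenvalues)) =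
      diagonal (fun i => 1 + hP.1.eigenvalues i) := by
    rw [← diagonal_one, diagonal_add]
    rfl
  rw [this, det_diagonal]
  calc (1 : ℝ) = ∏ _i : Fin n, 1 := by simp
    _ ≤ ∏ i, (1 + hP.1.eigenvalues i) :=
      Finset.prod_le_prod (fun i _ => zero_le_one)
        (fun i _ => by linarith [hP.eigenvalues_nonneg i])

/-- For symmetric PSD `H₁, H₂`, any `B` and `η > 0`, the block matrix
`J = [[I, -η Bᵀ H₂ B],[η H₁, I]]` satisfies `det J = det (I + η² H₁ Bᵀ H₂ B) ≥ 1`. -/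
theorem det_block_update_matrix (n : ℕ) (H₁ H₂ B : Matrix (Fin n) (Fin n) ℝ)
    (hH₁ : H₁.PosSemidef) (hH₂ : H₂.PosSemidef) (η : ℝ) (hη : 0 < η)
    (J : Matrix (Fin n ⊕ Fin n) (Fin n ⊕ Fin n) ℝ)
    (hJ : J = Matrix.fromBlocks 1 (-(η • (B.transpose * H₂ * B))) (η • H₁) 1) :
    J.det = ((1 : Matrix (Fin n) (Fin n) ℝ) + (η ^ 2) • (H₁ * (B.transpose * H₂ * B))).det ∧
      1 ≤ J.det := by
  set M := B.transpose * H₂ * B with hM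
  have hdet : J.det = ((1 : Matrix (Fin n) (Fin n) ℝ) + (η ^ 2) • (H₁ * M)).det := by
    rw [hJ, det_fromBlocks_one₁₁, Matrix.mul_neg, sub_neg_eq_add]
    congr 1
    congr 1
    rw [smul_mul_smul_comm, ← pow_two]
  refine ⟨hdet, ?_⟩
  rw [hdet]
  set S := CFC.sqrt H₁ with hS
  have hSs : S * S = H₁ := CFC.sqrt_mul_sqrt_self H₁ hH₁.nonneg
  have hSh : S.conjTranspose = S := (CFC.sqrt_nonneg H₁).posSemidef.1
  have hMps : M.PosSemidef := by
    have := hH₂.conjTranspose_mul_mul_same B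
    simpa [hM, conjTranspose_eq_transpose_of_trivial] using this
  have hP : ((η ^ 2) • (S * M * S)).PosSemidef := by
    have h1 := hMps.conjTranspose_mul_mul_same (η • S)
    have h2 : (η • S)ᴴ * M * (η • S) = (η ^ 2) • (S * M * S) := by
      rw [conjTranspose_smul, hSh, star_trivial, Matrix.smul_mul, Matrix.smul_mul,
        Matrix.mul_smul, smul_smul, ← pow_two]
    rwa [h2] at h1
  have key : ((1 : Matrix (Fin n) (Fin n) ℝ) + (η ^ 2) • (H₁ * M)).det =
      ((1 : Matrix (Fin n) (Fin n) ℝ) + (η ^ 2) • (S * M * S)).det := by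
    have h2 : (η ^ 2) • (H₁ * M) = S * ((η ^ 2) • (S * M)) := by
      rw [← hSs, Matrix.mul_smul, Matrix.mul_assoc]
    rw [h2, det_one_add_mul_comm, Matrix.smul_mul, Matrix.mul_assoc]
  rw [key]
  exact det_one_add_psd _ hP
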